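/- Let t > 0, r₀ > 0, let b, σ : [0,t] → ℝ be continuous with σ > 0, let d : [0,t] → (0,∞) be continuously differentiable, and set θ(s) = d(s)σ²(s)/4 and Σ(s,t) = (1/4) ∫_s^t exp(−∫_v^t b(u) du) σ²(v) dv. Then for every real ω, exp( iω [ r₀ e^{−∫_0^t b(u)du} / (1 − 2iω Σ(0,t)) + ∫_0^t e^{−∫_s^t b(u)du} θ(s) / (1 − 2iω Σ(s,t)) ds ] ) = exp( iω r₀ e^{−∫_0^t b(u)du} / (1 − 2iω Σ(0,t)) − (1/2) ∫_0^t d′(s) Log(1 − 2iω Σ(s,t)) ds ) / (1 − 2iω Σ(0,t))^{d(0)/2}, where Log is the principal complex logarithm and the complex power is the principal branch. -/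

import Mathlib

open intervalIntegral

/-- The variance kernel `Σ(s,t) = (1/4) ∫_s^t exp(−∫_v^t b(u) du) σ²(v) dv`. -/
noncomputable def cirSigma (b σ : ℝ → ℝ) (s t : ℝ) : ℝ :=
  (1 / 4) * ∫ v in s..t, Real.exp (-∫ u in v..t, b u) * (σ v) ^ 2

/-- Equality of the two forms of the characteristic function of the extended CIR rate:
the form of Theorem 2 (after integration by parts) and the form of Lemma 2.8,
with `θ(s) = d(s)σ²(s)/4` (principal-branch logarithm and power). -/
theorem cir_charFun_two_forms (t r₀ : ℝ) (ht : 0 < t) (hr₀ : 0 < r₀) (b σ d d' : ℝ → ℝ)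
    (hb : ContinuousOn b (Set.Icc 0 t)) (hσ : ContinuousOn σ (Set.Icc 0 t))
    (hσpos : ∀ s ∈ Set.Icc 0 t, 0 < σ s)
    (hdpos : ∀ s ∈ Set.Icc 0 t, 0 < d s)
    (hd : ∀ s ∈ Set.Icc 0 t, HasDerivWithinAt d (d' s) (Set.Icc 0 t) s)
    (hd' : ContinuousOn d' (Set.Icc 0 t))
    (θ : ℝ → ℝ) (hθ : ∀ s, θ s = d s * (σ s) ^ 2 / 4) (ω : ℝ) :
    Complex.exp (Complex.I * (ω : ℂ) *
        (((r₀ * Real.exp (-∫ u in (0 : ℝ)..t, b u) : ℝ) : ℂ) /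
            (1 - 2 * Complex.I * (ω : ℂ) * (cirSigma b σ 0 t : ℂ)) +
          ∫ s in (0 : ℝ)..t,
            ((Real.exp (-∫ u in s..t, b u) * θ s : ℝ) : ℂ) /
              (1 - 2 * Complex.I * (ω : ℂ) * (cirSigma b σ s t : ℂ)))) =
      Complex.exp (Complex.I * (ω : ℂ) *
            (((r₀ * Real.exp (-∫ u in (0 : ℝ)..t, b u) : ℝ) : ℂ) /
              (1 - 2 * Complex.I * (ω : ℂ) * (cirSigma b σ 0 t : ℂ))) -
          (1 / 2 : ℂ) *
            ∫ s in (0 : ℝ)..t,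
              (d' s : ℂ) *
                Complex.log (1 - 2 * Complex.I * (ω : ℂ) * (cirSigma b σ s t : ℂ))) /
        (1 - 2 * Complex.I * (ω : ℂ) * (cirSigma b σ 0 t : ℂ)) ^ ((d 0 : ℂ) / 2) := by
  -- clamp to [0,t]
  set c : ℝ → ℝ := fun x => max 0 (min x t) with hc
  have hct : Continuous c := continuous_const.max (continuous_id.min continuous_const)
  have hcmem : ∀ x, c x ∈ Set.Icc 0 t :=
    fun x => ⟨le_max_left _ _, max_le ht.le (min_le_right _ _)⟩
  have hceq : ∀ x ∈ Set.Icc (0:ℝ) t, c x = x := fun x hx => by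
    simp only [hc]; rw [min_eq_left hx.2, max_eq_right hx.1]
  set B : ℝ → ℝ := b ∘ c with hBdef
  set S : ℝ → ℝ := σ ∘ c with hSdef
  have hBc : Continuous B := hb.comp_continuous hct hcmem
  have hSc : Continuous S := hσ.comp_continuous hct hcmem
  have hBeq : ∀ x ∈ Set.Icc (0:ℝ) t, B x = b x := fun x hx => by
    simp only [hBdef, Function.comp_apply, hceq x hx]
  have hSeq : ∀ x ∈ Set.Icc (0:ℝ) t, S x = σ x := fun x hx => by
    simp only [hSdef, Function.comp_apply, hceq x hx]
  have hint : ∀ v ∈ Set.Icc (0:ℝ) t, (∫ u in v..t, b u) = ∫ u in v..t, B u := by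
    intro v hv
    refine intervalIntegral.integral_congr fun u hu => ?_
    rw [Set.uIcc_of_le hv.2] at hu
    exact (hBeq u ⟨hv.1.trans hu.1, hu.2⟩).symm
  -- the integrand g
  set g : ℝ → ℝ := fun v => Real.exp (-∫ u in v..t, B u) * (S v) ^ 2 with hgdef
  have hprim : Continuous fun v : ℝ => ∫ u in v..t, B u := by
    have h : ∀ v : ℝ, (∫ u in v..t, B u) = (∫ u in (0:ℝ)..t, B u) - ∫ u in (0:ℝ)..v, B u :=
      fun v => (intervalIntegral.integral_interval_sub_left (hBc.intervalIntegrable 0 t)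
        (hBc.intervalIntegrable 0 v)).symm
    rw [show (fun v : ℝ => ∫ u in v..t, B u)
        = fun v => (∫ u in (0:ℝ)..t, B u) - ∫ u in (0:ℝ)..v, B u from funext h]
    exact continuous_const.sub
      (intervalIntegral.continuous_primitive (fun a b => hBc.intervalIntegrable a b) 0)
  have hgc : Continuous g := (Real.continuous_exp.comp hprim.neg).mul (hSc.pow 2)
  -- the kernel Sg
  set Sg : ℝ → ℝ := fun s => (1/4) * ∫ v in s..t, g v with hSgdef
  have hSgd : ∀ s : ℝ, HasDerivAt Sg (-(1/4) * g s) s := by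
    intro s
    rw [hSgdef]
    have h := intervalIntegral.integral_hasDerivAt_left (hgc.intervalIntegrable s t)
      (hgc.stronglyMeasurableAtFilter _ _) hgc.continuousAt
    have h2 := h.const_mul (1/4 : ℝ)
    exact h2.congr_deriv (by ring)
  have hSgc : Continuous Sg := continuous_iff_continuousAt.2 fun s => (hSgd s).continuousAt
  have hSgt : Sg t = 0 := by simp [hSgdef]
  -- F and its properties
  set F : ℝ → ℂ := fun s => 1 - 2 * Complex.I * (ω : ℂ) * ((Sg s : ℝ) : ℂ) with hFdef
  have hFre : ∀ s : ℝ, (F s).re = 1 := by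
    intro s
    simp [hFdef, Complex.sub_re, Complex.mul_re, Complex.mul_im]
  have hmem : ∀ s : ℝ, F s ∈ Complex.slitPlane := fun s =>
    Complex.mem_slitPlane_iff.2 (Or.inl (by rw [hFre]; norm_num))
  have hFne : ∀ s : ℝ, F s ≠ 0 := fun s => Complex.slitPlane_ne_zero (hmem s)
  have hFd : ∀ s : ℝ, HasDerivAt F (Complex.I * (ω : ℂ) * (g s : ℂ) / 2) s := by
    intro s
    rw [hFdef]
    have h1 : HasDerivAt (fun x : ℝ => ((Sg x : ℝ) : ℂ)) ((-(1/4) * g s : ℝ) : ℂ) s :=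
      (hSgd s).ofReal_comp
    have h2 := (h1.const_mul (2 * Complex.I * (ω : ℂ))).const_sub 1
    exact h2.congr_deriv (by push_cast; ring)
  have hFc : Continuous F :=
    continuous_const.sub (continuous_const.mul (Complex.continuous_ofReal.comp hSgc))
  have hFt : F t = 1 := by simp [hFdef, hSgt]
  -- L = log ∘ F
  set L : ℝ → ℂ := fun s => Complex.log (F s) with hLdef
  have hLd : ∀ s : ℝ, HasDerivAt L ((F s)⁻¹ * (Complex.I * (ω : ℂ) * (g s : ℂ) / 2)) s := by
    intro s
    rw [hLdef]
    exact (Complex.hasDerivAt_log (hmem s)).comp s (hFd s)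
  have hLc : Continuous L := continuous_iff_continuousAt.2 fun s => (hLd s).continuousAt
  have hLt : L t = 0 := by simp [hLdef, hFt]
  have hdC : ContinuousOn d (Set.Icc 0 t) := fun s hs => (hd s hs).continuousWithinAt
  -- G and its derivative
  set G : ℝ → ℂ := fun s => (d s : ℂ) / 2 * L s with hGdef
  set Gd : ℝ → ℂ := fun s => (d' s : ℂ) / 2 * L s +
    (d s : ℂ) / 2 * ((F s)⁻¹ * (Complex.I * (ω : ℂ) * (g s : ℂ) / 2)) with hGddef
  have hGd : ∀ s ∈ Set.Icc (0:ℝ) t, HasDerivWithinAt G (Gd s) (Set.Icc 0 t) s := by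
    intro s hs
    have h1 : HasDerivWithinAt (fun x : ℝ => ((d x : ℝ) : ℂ)) ((d' s : ℝ) : ℂ)
        (Set.Icc 0 t) s := by
      exact (hd s hs).ofReal_comp
    rw [hGdef, hGddef]
    exact (h1.div_const 2).mul (hLd s).hasDerivWithinAt
  have hGc : ContinuousOn G (Set.Icc 0 t) :=
    ((Complex.continuous_ofReal.comp_continuousOn hdC).div_const 2).mul hLc.continuousOn
  -- integrability
  have h1i : IntervalIntegrable (fun s => (d' s : ℂ) / 2 * L s) MeasureTheory.volume 0 t := by
    apply ContinuousOn.intervalIntegrable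
    rw [Set.uIcc_of_le ht.le]
    exact ((Complex.continuous_ofReal.comp_continuousOn hd').div_const 2).mul hLc.continuousOn
  have h2i : IntervalIntegrable
      (fun s => (d s : ℂ) / 2 * ((F s)⁻¹ * (Complex.I * (ω : ℂ) * (g s : ℂ) / 2)))
      MeasureTheory.volume 0 t := by
    apply ContinuousOn.intervalIntegrable
    rw [Set.uIcc_of_le ht.le]
    exact ((Complex.continuous_ofReal.comp_continuousOn hdC).div_const 2).mul
      ((hFc.continuousOn.inv₀ fun s _ => hFne s).mul
        (((continuous_const.mul (Complex.continuous_ofReal.comp hgc)).div_const 2)).continuousOn)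
  have hGdi : IntervalIntegrable Gd MeasureTheory.volume 0 t := h1i.add h2i
  -- FTC
  have hFTC : (∫ s in (0:ℝ)..t, Gd s) = G t - G 0 := by
    refine intervalIntegral.integral_eq_sub_of_hasDeriv_right_of_le ht.le hGc
      (fun x hx => ?_) hGdi
    exact (hGd x ⟨hx.1.le, hx.2.le⟩).mono_of_mem_nhdsWithin (Icc_mem_nhdsGT_of_mem ⟨hx.1.le, hx.2⟩)
  have hGt : G t = 0 := by simp [hGdef, hLt]
  -- bridge to cirSigma
  have hgeq : ∀ s ∈ Set.Icc (0:ℝ) t, Real.exp (-∫ u in s..t, b u) * (σ s) ^ 2 = g s := by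
    intro s hs
    simp only [hgdef]
    rw [hint s hs, hSeq s hs]
  have hSgeq : ∀ s ∈ Set.Icc (0:ℝ) t, cirSigma b σ s t = Sg s := by
    intro s hs
    unfold cirSigma
    simp only [hSgdef]
    congr 1
    refine intervalIntegral.integral_congr fun v hv => ?_
    rw [Set.uIcc_of_le hs.2] at hv
    exact hgeq v ⟨hs.1.trans hv.1, hv.2⟩
  -- rewrite the log integral
  have hK : (∫ s in (0:ℝ)..t, (d' s : ℂ) *
        Complex.log (1 - 2 * Complex.I * (ω : ℂ) * (cirSigma b σ s t : ℂ)))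
      = ∫ s in (0:ℝ)..t, (d' s : ℂ) * L s := by
    refine intervalIntegral.integral_congr fun s hs => ?_
    rw [Set.uIcc_of_le ht.le] at hs
    rw [hSgeq s hs, hLdef, hFdef]
  -- main integral computation
  have hJ : Complex.I * (ω : ℂ) * (∫ s in (0:ℝ)..t,
        ((Real.exp (-∫ u in s..t, b u) * θ s : ℝ) : ℂ) /
          (1 - 2 * Complex.I * (ω : ℂ) * (cirSigma b σ s t : ℂ)))
      = -((d 0 : ℂ) / 2 * Complex.log (F 0))
        - (1/2 : ℂ) * ∫ s in (0:ℝ)..t, (d' s : ℂ) * L s := by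
    have heq : ∀ s ∈ Set.uIcc (0:ℝ) t, Complex.I * (ω : ℂ) *
        (((Real.exp (-∫ u in s..t, b u) * θ s : ℝ) : ℂ) /
          (1 - 2 * Complex.I * (ω : ℂ) * (cirSigma b σ s t : ℂ)))
        = (d s : ℂ) / 2 * ((F s)⁻¹ * (Complex.I * (ω : ℂ) * (g s : ℂ) / 2)) := by
      intro s hs
      rw [Set.uIcc_of_le ht.le] at hs
      rw [hSgeq s hs, hθ s, show g s = Real.exp (-∫ u in s..t, b u) * (σ s) ^ 2 from
        (hgeq s hs).symm]
      have hne : (1 : ℂ) - 2 * Complex.I * (ω : ℂ) * ((Sg s : ℝ) : ℂ) ≠ 0 := by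
        rw [show (1:ℂ) - 2 * Complex.I * (ω:ℂ) * ((Sg s : ℝ):ℂ) = F s from by rw [hFdef]]
        exact hFne s
      rw [show F s = 1 - 2 * Complex.I * (ω : ℂ) * ((Sg s : ℝ) : ℂ) from by rw [hFdef]]
      push_cast
      field_simp
      ring
    rw [← intervalIntegral.integral_const_mul, intervalIntegral.integral_congr heq]
    have hsplit : (∫ s in (0:ℝ)..t, Gd s)
        = (∫ s in (0:ℝ)..t, (d' s : ℂ) / 2 * L s)
          + ∫ s in (0:ℝ)..t, (d s : ℂ) / 2 * ((F s)⁻¹ * (Complex.I * (ω:ℂ) * (g s : ℂ) / 2)) :=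
      intervalIntegral.integral_add h1i h2i
    have hhalf : (∫ s in (0:ℝ)..t, (d' s : ℂ) / 2 * L s)
        = (1/2 : ℂ) * ∫ s in (0:ℝ)..t, (d' s : ℂ) * L s := by
      rw [← intervalIntegral.integral_const_mul]
      refine intervalIntegral.integral_congr fun s _ => by ring
    rw [hFTC, hGt] at hsplit
    rw [hhalf] at hsplit
    have hG0 : G 0 = (d 0 : ℂ) / 2 * Complex.log (F 0) := by rw [hGdef, hLdef]
    rw [hG0] at hsplit
    linear_combination -hsplit
  -- final assembly
  rw [hK, hSgeq 0 (Set.left_mem_Icc.mpr ht.le)]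
  rw [show (1:ℂ) - 2 * Complex.I * (ω:ℂ) * ((Sg 0 : ℝ):ℂ) = F 0 from by rw [hFdef]]
  rw [Complex.cpow_def_of_ne_zero (hFne 0), ← Complex.exp_sub]
  congr 1
  linear_combination hJ
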